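/- Let G be a finite simple graph with positive real vertex weights ω, and let u, v be non-adjacent vertices of G such that N(u) ⊆ N(v) and ω(u) + ω(v) < ω(N(v)). Let G' be the graph obtained from G by adding the edge {u,v}, and let ω' agree with ω except ω'(v) = ω(v) + ω(u). Then α_{ω'}(G') = α_ω(G). -/

import Mathlib

open scoped Classical

/-- `S` is an independent set of vertices in `G`: no two members are adjacent. -/
def IsIndepSet {V : Type*} (G : SimpleGraph V) (S : Finset V) : Prop :=
  ∀ a ∈ S, ∀ b ∈ S, ¬ G.Adj a b

/-- The maximum total `w`-weight of an independent set of `G` contained in `A`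
(the weighted independence number of the subgraph of `G` induced on `A`). -/
noncomputable def alphaOn {V : Type*} [Fintype V] (G : SimpleGraph V) (w : V → ℝ)
    (A : Set V) : ℝ :=
  sSup {x : ℝ | ∃ S : Finset V, ↑S ⊆ A ∧ IsIndepSet G S ∧ x = ∑ v ∈ S, w v}

/-- The maximum total `w`-weight of an independent set of `G`. -/
noncomputable def alpha {V : Type*} [Fintype V] (G : SimpleGraph V) (w : V → ℝ) : ℝ :=
  alphaOn G w Set.univ

/-- `S` is a maximum `w`-weight independent set of `G`. -/
def IsMWIS {V : Type*} [Fintype V] (G : SimpleGraph V) (w : V → ℝ) (S : Finset V) : Prop :=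
  IsIndepSet G S ∧ ∑ v ∈ S, w v = alpha G w

/-- The closed neighborhood `N[v]` of a vertex. -/
def closedNbhd {V : Type*} (G : SimpleGraph V) (v : V) : Set V :=
  insert v (G.neighborSet v)

/-- The open neighborhood `N(S)` of a set of vertices. -/
def setNbhd {V : Type*} (G : SimpleGraph V) (S : Set V) : Set V :=
  (⋃ s ∈ S, G.neighborSet s) \ S

/-- The closed neighborhood `N[S]` of a set of vertices. -/
def closedSetNbhd {V : Type*} (G : SimpleGraph V) (S : Set V) : Set V :=
  setNbhd G S ∪ S

def valset {V : Type*} [Fintype V] (G : SimpleGraph V) (w : V → ℝ) : Set ℝ :=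
  {x : ℝ | ∃ S : Finset V, IsIndepSet G S ∧ x = ∑ v ∈ S, w v}

lemma alpha_eq {V : Type*} [Fintype V] (G : SimpleGraph V) (w : V → ℝ) :
    alpha G w = sSup (valset G w) := by
  unfold alpha alphaOn valset
  congr 1
  ext x
  simp [Set.subset_univ]

lemma valset_nonempty {V : Type*} [Fintype V] (G : SimpleGraph V) (w : V → ℝ) :
    (valset G w).Nonempty :=
  ⟨0, ∅, by simp [IsIndepSet]⟩

lemma valset_finite {V : Type*} [Fintype V] (G : SimpleGraph V) (w : V → ℝ) :
    (valset G w).Finite := by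
  have h : valset G w = (fun S : Finset V => ∑ v ∈ S, w v) '' {S | IsIndepSet G S} := by
    ext x
    simp [valset, eq_comm, Set.mem_image]
  rw [h]
  exact (Set.toFinite _).image _

lemma valset_bddAbove {V : Type*} [Fintype V] (G : SimpleGraph V) (w : V → ℝ) :
    BddAbove (valset G w) :=
  (valset_finite G w).bddAbove

theorem stmt_3 {V : Type*} [Fintype V] (G : SimpleGraph V) (w : V → ℝ)
    (hw : ∀ x, 0 < w x) (u v : V) (hne : u ≠ v) (hnadj : ¬ G.Adj u v)
    (hsub : G.neighborSet u ⊆ G.neighborSet v)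
    (hwt : w u + w v < ∑ x ∈ Finset.univ.filter (fun x => G.Adj v x), w x) :
    alpha (G ⊔ SimpleGraph.fromEdgeSet {s(u, v)}) (Function.update w v (w v + w u)) =
      alpha G w := by
  classical
  set G' := G ⊔ SimpleGraph.fromEdgeSet {s(u, v)} with hG'
  set w' := Function.update w v (w v + w u) with hw'
  have hadj' : ∀ a b, G'.Adj a b ↔ G.Adj a b ∨ (a = u ∧ b = v) ∨ (a = v ∧ b = u) := by
    intro a b
    constructor
    · rintro (h | h)
      · exact Or.inl h
      · rw [SimpleGraph.fromEdgeSet_adj] at h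
        rcases Sym2.eq_iff.1 (Set.mem_singleton_iff.1 h.1) with ⟨rfl, rfl⟩ | ⟨rfl, rfl⟩
        · exact Or.inr (Or.inl ⟨rfl, rfl⟩)
        · exact Or.inr (Or.inr ⟨rfl, rfl⟩)
    · rintro (h | ⟨rfl, rfl⟩ | ⟨rfl, rfl⟩)
      · exact Or.inl h
      · exact Or.inr ((SimpleGraph.fromEdgeSet_adj _).2 ⟨rfl, hne⟩)
      · exact Or.inr ((SimpleGraph.fromEdgeSet_adj _).2 ⟨by rw [Sym2.eq_swap]; rfl, hne.symm⟩)
  have hsum_no : ∀ S : Finset V, v ∉ S → ∑ x ∈ S, w' x = ∑ x ∈ S, w x := by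
    intro S hv
    exact Finset.sum_congr rfl fun x hx => Function.update_of_ne (by rintro rfl; exact hv hx) _ _
  have hsum_yes : ∀ S : Finset V, v ∈ S → ∑ x ∈ S, w' x = w u + ∑ x ∈ S, w x := by
    intro S hv
    rw [← Finset.sum_erase_add S w' hv, ← Finset.sum_erase_add S w hv,
      hsum_no _ (Finset.notMem_erase v S)]
    have : w' v = w v + w u := Function.update_self v _ w
    rw [this]; ring
  rw [alpha_eq, alpha_eq]
  apply le_antisymm
  · apply csSup_le (valset_nonempty _ _)
    rintro x ⟨S, hS, rfl⟩
    have hindG : IsIndepSet G S := fun a ha b hb hab =>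
      hS a ha b hb ((hadj' a b).2 (Or.inl hab))
    by_cases hv : v ∈ S
    · have hu : u ∉ S := fun hu =>
        hS u hu v hv ((hadj' u v).2 (Or.inr (Or.inl ⟨rfl, rfl⟩)))
      have hind : IsIndepSet G (insert u S) := by
        intro a ha b hb hab
        rcases Finset.mem_insert.1 ha with rfl | ha'
        · rcases Finset.mem_insert.1 hb with rfl | hb'
          · exact G.loopless.irrefl _ hab
          · exact hindG v hv b hb' (hsub hab)
        · rcases Finset.mem_insert.1 hb with rfl | hb'
          · exact hindG v hv a ha' (hsub hab.symm)
          · exact hindG a ha' b hb' hab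
      have heq : ∑ x ∈ S, w' x = ∑ x ∈ insert u S, w x := by
        rw [Finset.sum_insert hu, hsum_yes S hv]
      rw [heq]
      exact le_csSup (valset_bddAbove G w) ⟨insert u S, hind, rfl⟩
    · rw [hsum_no S hv]
      exact le_csSup (valset_bddAbove G w) ⟨S, hindG, rfl⟩
  · apply csSup_le (valset_nonempty _ _)
    rintro x ⟨S, hS, rfl⟩
    by_cases huv : u ∈ S ∧ v ∈ S
    · obtain ⟨hu, hv⟩ := huv
      have hind' : IsIndepSet G' (S.erase u) := by
        intro a ha b hb hab
        rcases (hadj' a b).1 hab with h | ⟨rfl, rfl⟩ | ⟨rfl, rfl⟩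
        · exact hS a (Finset.mem_of_mem_erase ha) b (Finset.mem_of_mem_erase hb) h
        · exact Finset.ne_of_mem_erase ha rfl
        · exact Finset.ne_of_mem_erase hb rfl
      have hvS : v ∈ S.erase u := Finset.mem_erase.2 ⟨hne.symm, hv⟩
      have heq : ∑ x ∈ S.erase u, w' x = ∑ x ∈ S, w x := by
        rw [hsum_yes _ hvS, ← Finset.sum_erase_add S w hu]; ring
      rw [← heq]
      exact le_csSup (valset_bddAbove _ _) ⟨S.erase u, hind', rfl⟩
    · have hind' : IsIndepSet G' S := by
        intro a ha b hb hab
        rcases (hadj' a b).1 hab with h | ⟨rfl, rfl⟩ | ⟨rfl, rfl⟩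
        · exact hS a ha b hb h
        · exact huv ⟨ha, hb⟩
        · exact huv ⟨hb, ha⟩
      have hle : ∑ x ∈ S, w x ≤ ∑ x ∈ S, w' x := by
        by_cases hv : v ∈ S
        · rw [hsum_yes S hv]; linarith [hw u]
        · rw [hsum_no S hv]
      exact hle.trans (le_csSup (valset_bddAbove _ _) ⟨S, hind', rfl⟩)
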